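/- Let T be a triangulated category with a bounded t-structure, G an object of T, and d a positive integer. Then there exists an integer N > 0 such that: if E ∈ T^{≥ a} for some integer a, P → E is a morphism inducing isomorphisms on H^n for all n ≥ a - N, and P lies in ⟨G⟩_d, then E lies in ⟨G⟩_d. -/

import Mathlib

/-!
Common preamble: generation in triangulated categories, truncation triangles for
t-structures, "isomorphism in degrees ≥ a", levels `⟨G⟩_n`, `coprod_n`,
and Rouquier dimension.
-/

open CategoryTheory Limits Pretriangulated Triangulated

namespace RouquierApprox

variable {C : Type*} [Category C] [Preadditive C] [HasZeroObject C] [HasShift C ℤ]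
  [∀ (n : ℤ), (shiftFunctor C n).Additive] [Pretriangulated C]

/-- A t-structure is non-degenerate if `⋂ₙ T^{≥n} = 0 = ⋂ₙ T^{≤-n}`. -/
def IsNonDegenerate (t : TStructure C) : Prop :=
  (∀ X : C, (∀ n : ℤ, t.ge n X) → IsZero X) ∧ (∀ X : C, (∀ n : ℤ, t.le n X) → IsZero X)

/-- A t-structure is bounded if every object is bounded. -/
def IsBoundedTStructure (t : TStructure C) : Prop :=
  ∀ X : C, ∃ n : ℤ, 0 < n ∧ t.le n X ∧ t.ge (-n) X

/-- A choice of truncation triangle `τ_{≤ a-1} A ⟶ A ⟶ τ_{≥ a} A ⟶ (τ_{≤ a-1} A)[1]`. -/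
structure TruncGETriangle (t : TStructure C) (a : ℤ) (A : C) where
  left : C
  right : C
  left_le : t.le (a - 1) left
  right_ge : t.ge a right
  ι : left ⟶ A
  π : A ⟶ right
  δ : right ⟶ left⟦(1 : ℤ)⟧
  dist : Triangle.mk ι π δ ∈ distTriang C

/-- `f : A ⟶ B` induces isomorphisms on the cohomology objects `H^n` (with respect to
the t-structure `t`) for all `n ≥ a`; for a non-degenerate t-structure this is
equivalently expressed by saying that any morphism induced by `f` between the
truncations `τ_{≥ a} A ⟶ τ_{≥ a} B` is an isomorphism. -/
def IsIsoInDegreesGE (t : TStructure C) (a : ℤ) {A B : C} (f : A ⟶ B) : Prop :=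
  ∀ (TA : TruncGETriangle t a A) (TB : TruncGETriangle t a B) (g : TA.right ⟶ TB.right),
    TA.π ≫ g = f ≫ TB.π → IsIso g

/-- `P` is a retract (direct summand) of `F`. -/
def IsRetract (P F : C) : Prop := ∃ (i : P ⟶ F) (r : F ⟶ P), i ≫ r = 𝟙 P

/-- Finite coproducts of shifts of objects of `S`. -/
def finCoprodShifts (S : Set C) : Set C :=
  {X | ∃ (k : ℕ) (obj : Fin k → C) (s : Fin k → ℤ),
    (∀ i, obj i ∈ S) ∧ Nonempty (X ≅ ⨁ (fun i => (obj i)⟦s i⟧))}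

/-- `add S`: retracts of finite coproducts of shifts of objects of `S`, i.e. the
closure of `S` under shifts, finite coproducts and retracts. -/
def addSet (S : Set C) : Set C := {X | ∃ F ∈ finCoprodShifts S, IsRetract X F}

/-- Cones of morphisms from an object of `S` to an object of `T`. -/
def coneSet (S T : Set C) : Set C :=
  {Z | ∃ (A B : C) (f : A ⟶ B) (g : B ⟶ Z) (h : Z ⟶ A⟦(1 : ℤ)⟧),
    A ∈ S ∧ B ∈ T ∧ Triangle.mk f g h ∈ distTriang C}

/-- The level filtration `⟨G⟩_n`: `⟨G⟩_0` consists of zero objects, `⟨G⟩_1 = add G`,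
and `⟨G⟩_n = add (cones of maps from ⟨G⟩_{n-1} to ⟨G⟩_1)`. -/
def levelSet (G : C) : ℕ → Set C
  | 0 => {X | IsZero X}
  | 1 => addSet {G}
  | (n+2) => addSet (coneSet (levelSet G (n+1)) (addSet {G}))

/-- `coprod_n (G(-∞,∞))`: as `levelSet` but without retracts. -/
def coprodLevel (G : C) : ℕ → Set C
  | 0 => {X | IsZero X}
  | 1 => finCoprodShifts {G}
  | (n+2) => coneSet (coprodLevel G (n+1)) (finCoprodShifts {G})

/-- The level of `E` with respect to `G`: the minimal `n` with `E ∈ ⟨G⟩_n`. -/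
noncomputable def levelOf (G E : C) : ℕ∞ :=
  sInf {n : ℕ∞ | ∃ k : ℕ, n = k ∧ E ∈ levelSet G k}

/-- The Rouquier dimension of a (strictly full triangulated) subcategory `S` of `C`,
with levels computed in the ambient category: the least `d` such that
`S ⊆ ⟨G⟩_{d+1}` for some `G ∈ S`. -/
noncomputable def relRouquierDim (S : Set C) : ℕ∞ :=
  sInf {d : ℕ∞ | ∃ (k : ℕ) (G : C), G ∈ S ∧ d = k ∧ S ⊆ levelSet G (k + 1)}

/-- `G` is a strong generator of the (strictly full triangulated) subcategory `S`. -/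
def IsStrongGeneratorOf (S : Set C) (G : C) : Prop :=
  G ∈ S ∧ ∃ n : ℕ, S ⊆ levelSet G n

/-- A morphism `ψ : K ⟶ L` is `G`-ghost if every composition `G⟦n⟧ ⟶ K ⟶ L` vanishes. -/
def IsGhost (G : C) {K L : C} (ψ : K ⟶ L) : Prop :=
  ∀ (n : ℤ) (φ : G⟦n⟧ ⟶ K), φ ≫ ψ = 0

end RouquierApprox

open CategoryTheory Limits Pretriangulated Triangulated RouquierApprox

namespace RouquierApproxProof

variable {C : Type*} [Category C] [Preadditive C] [HasZeroObject C] [HasShift C ℤ]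
  [∀ (n : ℤ), (shiftFunctor C n).Additive] [Pretriangulated C]

variable (t : TStructure C)

lemma le_of_isZero (hb : IsBoundedTStructure t) {X : C} (hX : IsZero X) (n : ℤ) : t.le n X := by
  obtain ⟨m, -, hle, -⟩ := hb X
  have h1 : t.le n (X⟦m - n⟧) := t.le_shift m (m - n) n (by ring) X hle
  exact ((t.le n).prop_iff_of_iso (((shiftFunctor C (m - n)).map_isZero hX).iso hX)).1 h1

lemma ge_of_isZero (hb : IsBoundedTStructure t) {X : C} (hX : IsZero X) (n : ℤ) : t.ge n X := by
  obtain ⟨m, -, -, hge⟩ := hb X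
  have h1 : t.ge n (X⟦-m - n⟧) := t.ge_shift (-m) (-m - n) n (by ring) X hge
  exact ((t.ge n).prop_iff_of_iso (((shiftFunctor C (-m - n)).map_isZero hX).iso hX)).1 h1

lemma hom_zero {X Y : C} {nX nY : ℤ} (hX : t.le nX X) (hY : t.ge nY Y) (h : nX < nY)
    (f : X ⟶ Y) : f = 0 := by
  have hX' : t.le 0 (X⟦nX⟧) := t.le_shift nX nX 0 (by ring) X hX
  have hY' : t.ge 1 (Y⟦nX⟧) := t.ge_shift (nX + 1) nX 1 rfl Y (t.ge_antitone (by omega) Y hY)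
  have hz : (shiftFunctor C nX).map f = 0 := t.zero' ((shiftFunctor C nX).map f) hX' hY'
  apply (shiftFunctor C nX).map_injective
  rw [hz, Functor.map_zero]

lemma ge_shift' {n : ℤ} {X : C} (h : t.ge n X) (σ : ℤ) : t.ge (n - σ) (X⟦σ⟧) :=
  t.ge_shift n σ (n - σ) (by ring) X h

lemma le_shift' {n : ℤ} {X : C} (h : t.le n X) (σ : ℤ) : t.le (n - σ) (X⟦σ⟧) :=
  t.le_shift n σ (n - σ) (by ring) X h

lemma ge_ext {T : Triangle C} (hT : T ∈ distTriang C) {m : ℤ}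
    (h₁ : t.ge m T.obj₁) (h₃ : t.ge m T.obj₃) : t.ge m T.obj₂ := by
  obtain ⟨X, Y, hX, hY, f, g, h, mem⟩ := t.exists_triangle T.obj₂ (m - 1) m (by ring)
  have h1 : f ≫ T.mor₂ = 0 := hom_zero t hX h₃ (by omega) _
  obtain ⟨w, hw⟩ := Triangle.coyoneda_exact₂ T hT f h1
  have hf : f = 0 := by rw [hw, hom_zero t hX h₁ (by omega) w, zero_comp]
  obtain ⟨g', hg'⟩ := Triangle.coyoneda_exact₂ _ (inv_rot_of_distTriang _ mem) (𝟙 X)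
    (by simp [hf]; exact comp_zero)
  have hg0 : g' = 0 := hom_zero t hX (ge_shift' t hY (-1)) (by omega) g'
  have : IsZero X := by
    rw [IsZero.iff_id_eq_zero, hg', hg0, zero_comp]; rfl
  have hiso : IsIso g := Triangle.isZero₁_iff_isIso₂ _ mem |>.1 this
  exact ((t.ge m).prop_iff_of_iso (asIso g)).2 hY

lemma ge_binary {X Y : C} {m : ℤ} (hX : t.ge m X) (hY : t.ge m Y) : t.ge m (X ⊞ Y) :=
  ge_ext t (binaryBiproductTriangle_distinguished X Y) hX hY

noncomputable def finSuccBiprodIso (n : ℕ) (f : Fin (n + 1) → C) :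
    (⨁ f) ≅ f 0 ⊞ ⨁ (fun i : Fin n => f i.succ) where
  hom := biprod.lift (biproduct.π f 0) (biproduct.lift fun i => biproduct.π f i.succ)
  inv := biprod.desc (biproduct.ι f 0) (biproduct.desc fun i => biproduct.ι f i.succ)
  hom_inv_id := by
    rw [biprod.lift_desc, biproduct.lift_desc, ← biproduct.total, Fin.sum_univ_succ]
  inv_hom_id := by
    apply biprod.hom_ext'
    · apply biprod.hom_ext
      · simp
      · apply biproduct.hom_ext
        intro i
        simp [biproduct.ι_π_ne _ (Ne.symm (Fin.succ_ne_zero i))]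
    · apply biprod.hom_ext
      · apply biproduct.hom_ext'
        intro j
        simp [biproduct.ι_π_ne _ (Fin.succ_ne_zero j)]
      · apply biproduct.hom_ext'
        intro j
        apply biproduct.hom_ext
        intro i
        by_cases hji : j = i
        · subst hji; simp
        · simp [biproduct.ι_π_ne _ hji, biproduct.ι_π_ne _ (fun hc => hji (Fin.succ_injective _ hc))]

lemma ge_biproduct_fin (hb : IsBoundedTStructure t) :
    ∀ (n : ℕ) (f : Fin n → C) (m : ℤ), (∀ j, t.ge m (f j)) → t.ge m (⨁ f)
  | 0, f, m, _ => by
      refine ge_of_isZero t hb ?_ m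
      rw [IsZero.iff_id_eq_zero]
      apply biproduct.hom_ext
      intro j
      exact j.elim0
  | (n + 1), f, m, h => by
      have := ge_biproduct_fin hb n (fun i => f i.succ) m (fun i => h _)
      exact ((t.ge m).prop_iff_of_iso (finSuccBiprodIso n f)).2 (ge_binary t (h 0) this)

lemma ge_biproduct (hb : IsBoundedTStructure t) {J : Type} [Fintype J] (f : J → C) (m : ℤ)
    (h : ∀ j, t.ge m (f j)) : t.ge m (⨁ f) := by
  have h2 := ge_biproduct_fin t hb (Fintype.card J) (fun i => f ((Fintype.equivFin J).symm i)) m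
    (fun i => h _)
  exact ((t.ge m).prop_iff_of_iso
    (biproduct.whiskerEquiv (f := fun i => f ((Fintype.equivFin J).symm i)) (g := f)
      (Fintype.equivFin J).symm (fun i => Iso.refl _))).1 h2

end RouquierApproxProof
namespace RouquierApproxProof

variable {C : Type*} [Category C] [Preadditive C] [HasZeroObject C] [HasShift C ℤ]
  [∀ (n : ℤ), (shiftFunctor C n).Additive] [Pretriangulated C]

variable (t : TStructure C)

/-- `f` induces a bijection `Hom(B, Y) ≃ Hom(A, Y)` for every `Y ∈ T^{≥ m}`. -/
def GoodApprox (m : ℤ) {A B : C} (f : A ⟶ B) : Prop :=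
  ∀ Y : C, t.ge m Y →
    (∀ u : B ⟶ Y, f ≫ u = 0 → u = 0) ∧ (∀ q : A ⟶ Y, ∃ v : B ⟶ Y, q = f ≫ v)

lemma GoodApprox.mono {m m' : ℤ} (h : m ≤ m') {A B : C} {f : A ⟶ B}
    (hf : GoodApprox t m f) : GoodApprox t m' f :=
  fun Y hY => hf Y (t.ge_antitone h Y hY)

lemma GoodApprox.shift {m : ℤ} {A B : C} {f : A ⟶ B} (hf : GoodApprox t m f) (σ : ℤ) :
    GoodApprox t (m - σ) ((shiftFunctor C σ).map f) := by
  intro Y hY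
  have hY' : t.ge m (Y⟦-σ⟧) := t.ge_shift (m - σ) (-σ) m (by ring) Y hY
  obtain ⟨hinj, hsurj⟩ := hf (Y⟦-σ⟧) hY'
  set adj : shiftFunctor C σ ⊣ shiftFunctor C (-σ) := (shiftEquiv C σ).toAdjunction with hadj
  constructor
  · intro u hu
    have h0 : (adj.homEquiv A Y) ((shiftFunctor C σ).map f ≫ u) = f ≫ (adj.homEquiv B Y) u :=
      Adjunction.homEquiv_naturality_left adj f u
    rw [hu] at h0
    have hz : (adj.homEquiv A Y) (0 : (shiftFunctor C σ).obj A ⟶ Y) = 0 := by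
      simp [Adjunction.homEquiv_unit]
    rw [hz] at h0
    have h2 := hinj _ h0.symm
    have h3 : u = (adj.homEquiv B Y).symm ((adj.homEquiv B Y) u) :=
      (Equiv.symm_apply_apply _ _).symm
    rw [h3, h2]
    simp [Adjunction.homEquiv_counit]
  · intro q
    obtain ⟨v, hv⟩ := hsurj ((adj.homEquiv A Y) q)
    refine ⟨(adj.homEquiv B Y).symm v, ?_⟩
    have h4 := (adj.homEquiv A Y).symm_apply_apply q
    rw [← h4, hv, Adjunction.homEquiv_naturality_left_symm]

lemma GoodApprox.biproduct {J : Type} [Fintype J] {m : ℤ} {A B : J → C}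
    (f : ∀ j, A j ⟶ B j) (hf : ∀ j, GoodApprox t m (f j)) :
    GoodApprox t m (biproduct.map f) := by
  intro Y hY
  constructor
  · intro u hu
    apply biproduct.hom_ext'
    intro j
    have h1 : f j ≫ biproduct.ι B j ≫ u = 0 := by
      have := biproduct.ι A j ≫= hu
      simpa using this
    simpa using (hf j Y hY).1 (biproduct.ι B j ≫ u) h1
  · intro q
    choose v hv using fun j => (hf j Y hY).2 (biproduct.ι A j ≫ q)
    refine ⟨biproduct.desc v, ?_⟩
    apply biproduct.hom_ext'
    intro j
    simpa using hv j

end RouquierApproxProof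
namespace RouquierApproxProof

variable {C : Type*} [Category C] [Preadditive C] [HasZeroObject C] [HasShift C ℤ]
  [∀ (n : ℤ), (shiftFunctor C n).Additive] [Pretriangulated C]

lemma isRetract_trans {X Y Z : C} (h1 : IsRetract X Y) (h2 : IsRetract Y Z) : IsRetract X Z := by
  obtain ⟨i1, r1, h1⟩ := h1
  obtain ⟨i2, r2, h2⟩ := h2
  exact ⟨i1 ≫ i2, r2 ≫ r1, by rw [Category.assoc, ← Category.assoc i2, h2, Category.id_comp, h1]⟩

lemma isRetract_of_iso {X Y : C} (e : X ≅ Y) : IsRetract X Y := ⟨e.hom, e.inv, e.hom_inv_id⟩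

lemma isRetract_shift {X Y : C} (h : IsRetract X Y) (σ : ℤ) : IsRetract (X⟦σ⟧) (Y⟦σ⟧) := by
  obtain ⟨i, r, hir⟩ := h
  exact ⟨i⟦σ⟧', r⟦σ⟧', by simp [← Functor.map_comp, hir]⟩

lemma mem_finCoprodShifts_general {S : Set C} {J : Type} [Fintype J] (obj : J → C) (sh : J → ℤ)
    (hobj : ∀ j, obj j ∈ S) (X : C) (e : X ≅ ⨁ fun j => (obj j)⟦sh j⟧) :
    X ∈ finCoprodShifts S := by
  refine ⟨Fintype.card J, fun i => obj ((Fintype.equivFin J).symm i),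
    fun i => sh ((Fintype.equivFin J).symm i), fun i => hobj _,
    ⟨e ≪≫ (biproduct.whiskerEquiv (f := fun i => (obj ((Fintype.equivFin J).symm i))⟦sh ((Fintype.equivFin J).symm i)⟧)
      (g := fun j => (obj j)⟦sh j⟧) (Fintype.equivFin J).symm (fun i => Iso.refl _)).symm⟩⟩

/-- single object biproduct -/
noncomputable def biprodSingle (X : C) : X ≅ ⨁ (fun _ : PUnit.{1} => X) where
  hom := biproduct.lift fun _ => 𝟙 X
  inv := biproduct.desc fun _ => 𝟙 X
  hom_inv_id := by rw [biproduct.lift_desc]; simp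
  inv_hom_id := by
    apply biproduct.hom_ext'
    intro j
    apply biproduct.hom_ext
    intro i
    obtain rfl : j = i := rfl
    simp [biproduct.ι_π]

lemma mem_finCoprodShifts_self {S : Set C} {X : C} (hX : X ∈ S) : X ∈ finCoprodShifts S := by
  refine mem_finCoprodShifts_general (fun _ : PUnit => X) (fun _ => 0) (fun _ => hX) X
    (((shiftFunctorZero C ℤ).app X).symm ≪≫ biprodSingle (X⟦(0:ℤ)⟧) ≪≫ ?_)
  exact Iso.refl _

lemma mem_addSet_of_retract {S : Set C} {X F : C} (h : IsRetract X F) (hF : F ∈ addSet S) :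
    X ∈ addSet S := by
  obtain ⟨FF, hFF, hret⟩ := hF
  exact ⟨FF, hFF, isRetract_trans h hret⟩

lemma finCoprodShifts_subset_addSet (S : Set C) : finCoprodShifts S ⊆ addSet S :=
  fun X hX => ⟨X, hX, ⟨𝟙 X, 𝟙 X, Category.id_comp _⟩⟩

lemma mem_addSet_self {S : Set C} {X : C} (hX : X ∈ S) : X ∈ addSet S :=
  finCoprodShifts_subset_addSet S (mem_finCoprodShifts_self hX)

lemma mem_addSet_of_iso {S : Set C} {X Y : C} (e : X ≅ Y) (h : Y ∈ addSet S) : X ∈ addSet S :=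
  mem_addSet_of_retract (isRetract_of_iso e) h

lemma zero_mem_addSet (S : Set C) {X : C} (hX : IsZero X) : X ∈ addSet S := by
  refine ⟨⨁ (fun i : Fin 0 => (i.elim0 : C)⟦(0:ℤ)⟧), ⟨0, fun i => i.elim0, fun _ => 0,
    fun i => i.elim0, ⟨Iso.refl _⟩⟩, 0, 0, ?_⟩
  rw [zero_comp]
  exact (hX.eq_of_src _ _)

lemma finCoprodShifts_shift {S : Set C} {X : C} (hX : X ∈ finCoprodShifts S) (σ : ℤ) :
    X⟦σ⟧ ∈ finCoprodShifts S := by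
  obtain ⟨k, obj, sh, hobj, ⟨e⟩⟩ := hX
  refine ⟨k, obj, fun i => sh i + σ, hobj, ⟨(shiftFunctor C σ).mapIso e ≪≫
    (shiftFunctor C σ).mapBiproduct _ ≪≫
    biproduct.whiskerEquiv (f := fun i => ((obj i)⟦sh i⟧)⟦σ⟧)
      (g := fun i => (obj i)⟦sh i + σ⟧) (Equiv.refl _)
      (fun i => (shiftFunctorAdd' C (sh i) σ (sh i + σ) rfl).app (obj i))⟩⟩

lemma addSet_shift {S : Set C} {X : C} (hX : X ∈ addSet S) (σ : ℤ) : X⟦σ⟧ ∈ addSet S := by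
  obtain ⟨F, hF, hret⟩ := hX
  exact ⟨F⟦σ⟧, finCoprodShifts_shift hF σ, isRetract_shift hret σ⟩

lemma addSet_biproduct {S : Set C} {J : Type} [Fintype J] (X : J → C)
    (h : ∀ j, X j ∈ addSet S) : (⨁ X) ∈ addSet S := by
  classical
  choose F hF hretr using h
  choose iX rX hir using hretr
  have hret : IsRetract (⨁ X) (⨁ F) :=
    ⟨biproduct.map iX, biproduct.map rX, by ext; simp [hir]⟩
  refine mem_addSet_of_retract hret ?_
  apply finCoprodShifts_subset_addSet
  choose k obj sh hrest using hF
  have hobj : ∀ j i, obj j i ∈ S := fun j => (hrest j).1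
  have e : ∀ j, F j ≅ ⨁ fun i => (obj j i)⟦sh j i⟧ := fun j => (hrest j).2.some
  refine mem_finCoprodShifts_general (J := Σ j : J, Fin (k j)) (fun p => obj p.1 p.2)
    (fun p => sh p.1 p.2) (fun p => hobj p.1 p.2) _ ?_
  refine biproduct.whiskerEquiv (Equiv.refl J) (fun j => (e j).symm) ≪≫
    (biproductBiproductIso (fun j => Fin (k j)) (fun j i => (obj j i)⟦sh j i⟧))

lemma levelSet_shift {G : C} :
    ∀ {n : ℕ} {X : C}, X ∈ levelSet G n → ∀ (σ : ℤ), X⟦σ⟧ ∈ levelSet G n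
  | 0, X, hX, σ => (shiftFunctor C σ).map_isZero hX
  | 1, _, hX, σ => addSet_shift hX σ
  | (_ + 2), _, hX, σ => addSet_shift hX σ

lemma levelSet_retract {G : C} {d : ℕ} {X Y : C} (h : IsRetract X Y)
    (hY : Y ∈ levelSet G (d + 1)) : X ∈ levelSet G (d + 1) := by
  match d with
  | 0 => exact mem_addSet_of_retract h hY
  | (n + 1) => exact mem_addSet_of_retract h hY

lemma levelSet_iso {G : C} {d : ℕ} {X Y : C} (e : X ≅ Y)
    (hY : Y ∈ levelSet G (d + 1)) : X ∈ levelSet G (d + 1) :=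
  levelSet_retract (isRetract_of_iso e) hY

lemma levelSet_biproduct {G : C} {d : ℕ} {J : Type} [Fintype J] (X : J → C)
    (h : ∀ j, X j ∈ levelSet G (d + 1)) : (⨁ X) ∈ levelSet G (d + 1) := by
  match d with
  | 0 => exact addSet_biproduct X h
  | (n + 1) => exact addSet_biproduct X h

end RouquierApproxProof
namespace RouquierApproxProof

variable {C : Type*} [Category C] [Preadditive C] [HasZeroObject C] [HasShift C ℤ]
  [∀ (n : ℤ), (shiftFunctor C n).Additive] [Pretriangulated C]

variable (t : TStructure C)

/-- Splitting off the "high" part of a finite coproduct of shifts of `G`. -/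
lemma split_lemma (hb : IsBoundedTStructure t) {G : C} {n0 : ℤ}
    (hGle : t.le n0 G) (hGge : t.ge (-n0) G)
    (b : ℤ) {k : ℕ} (s : Fin k → ℤ) (B : C) (e : B ≅ ⨁ fun i => G⟦s i⟧) :
    ∃ (Bhi : C) (snd : B ⟶ Bhi), Bhi ∈ finCoprodShifts {G} ∧ t.ge b Bhi ∧
      GoodApprox t (b + 2 * n0) snd := by
  classical
  set f : Fin k → C := fun i => G⟦s i⟧ with hf
  set p : Fin k → Prop := fun i => s i ≤ -n0 - b with hp
  refine ⟨⨁ Subtype.restrict p f, e.hom ≫ biproduct.toSubtype f p, ?_, ?_, ?_⟩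
  · exact mem_finCoprodShifts_general (S := ({G} : Set C)) (fun j : Subtype p => G)
      (fun j => s j.1) (fun _ => rfl) (⨁ Subtype.restrict p f) (Iso.refl _)
  · exact ge_biproduct t hb _ b (fun j => t.ge_antitone
      (by have h2 : s j.1 ≤ -n0 - b := j.2; omega) _ (ge_shift' t hGge (s j.1)))
  · intro Y hY
    constructor
    · intro u hu
      have h0 : biproduct.toSubtype f p ≫ u = 0 := by
        have := e.inv ≫= hu
        simpa using this
      calc u = (biproduct.fromSubtype f p ≫ biproduct.toSubtype f p) ≫ u := by simp
        _ = 0 := by rw [Category.assoc, h0, comp_zero]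
    · intro q
      refine ⟨biproduct.fromSubtype f p ≫ e.inv ≫ q, ?_⟩
      have key : biproduct.toSubtype f p ≫ biproduct.fromSubtype f p ≫ (e.inv ≫ q)
          = e.inv ≫ q := by
        rw [← Category.assoc, biproduct.toSubtype_fromSubtype]
        apply biproduct.hom_ext'
        intro j
        rw [biproduct.ι_map_assoc]
        by_cases hj : p j
        · rw [if_pos hj, Category.id_comp]
        · rw [if_neg hj, zero_comp]
          have hle : t.le (n0 - s j) (f j) := le_shift' t hGle (s j)
          have hj' : ¬ s j ≤ -n0 - b := hj
          exact (hom_zero t hle hY (by omega) _).symm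
      rw [Category.assoc, key, Iso.hom_inv_id_assoc]
  
end RouquierApproxProof
namespace RouquierApproxProof

variable {C : Type*} [Category C] [Preadditive C] [HasZeroObject C] [HasShift C ℤ]
  [∀ (n : ℤ), (shiftFunctor C n).Additive] [Pretriangulated C]

variable (t : TStructure C)

/-- A retract of maps induces a retract of cones. -/
lemma retract_cone {A B A' B' Z Z' : C} {f : A ⟶ B} {g : B ⟶ Z} {h : Z ⟶ A⟦(1:ℤ)⟧}
    (dist : Triangle.mk f g h ∈ distTriang C)
    {f' : A' ⟶ B'} {g' : B' ⟶ Z'} {h' : Z' ⟶ A'⟦(1:ℤ)⟧}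
    (dist' : Triangle.mk f' g' h' ∈ distTriang C)
    {iA : A ⟶ A'} {rA : A' ⟶ A} (hA : iA ≫ rA = 𝟙 A)
    {iB : B ⟶ B'} {rB : B' ⟶ B} (hB : iB ≫ rB = 𝟙 B)
    (sq1 : f ≫ iB = iA ≫ f') (sq2 : f' ≫ rB = rA ≫ f) :
    IsRetract Z Z' := by
  obtain ⟨c, hc1, hc2⟩ := complete_distinguished_triangle_morphism _ _ dist dist' iA iB sq1
  obtain ⟨c', hc1', hc2'⟩ := complete_distinguished_triangle_morphism _ _ dist' dist rA rB sq2
  have hiso : IsIso (c ≫ c') := by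
    have comm₂ : g ≫ (c ≫ c') = 𝟙 B ≫ g := by
      have e1 : g ≫ c = iB ≫ g' := hc1
      have e2 : g' ≫ c' = rB ≫ g := hc1'
      exact (Category.assoc g c c').symm.trans ((congrArg (· ≫ c') e1).trans
        ((Category.assoc iB g' c').trans ((congrArg (iB ≫ ·) e2).trans
        ((Category.assoc iB rB g).symm.trans (congrArg (· ≫ g) hB)))))
    have comm₃ : h ≫ (𝟙 A)⟦(1:ℤ)⟧' = (c ≫ c') ≫ h := by
      have e3 : h ≫ iA⟦(1:ℤ)⟧' = c ≫ h' := hc2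
      have e4 : h' ≫ rA⟦(1:ℤ)⟧' = c' ≫ h := hc2'
      exact ((Category.assoc c c' h).trans ((congrArg (c ≫ ·) e4.symm).trans
        ((Category.assoc c h' _).symm.trans ((congrArg (· ≫ rA⟦(1:ℤ)⟧') e3.symm).trans
        ((Category.assoc h _ _).trans (congrArg (h ≫ ·)
        (((shiftFunctor C (1:ℤ)).map_comp iA rA).symm.trans
        (congrArg (fun x => x⟦(1:ℤ)⟧') hA)))))))).symm
    exact isIso₃_of_isIso₁₂
      ({ hom₁ := 𝟙 A, hom₂ := 𝟙 B, hom₃ := c ≫ c',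
         comm₁ := (Category.comp_id f).trans (Category.id_comp f).symm,
         comm₂ := comm₂, comm₃ := comm₃ } : Triangle.mk f g h ⟶ Triangle.mk f g h)
      dist dist (by exact IsIso.id A) (by exact IsIso.id B)
  exact ⟨c, c' ≫ @inv _ _ _ _ (c ≫ c') hiso,
    (Category.assoc _ _ _).symm.trans (@IsIso.hom_inv_id _ _ _ _ (c ≫ c') hiso)⟩

/-- The inductive cone step: given a good approximation of `F'` and of `B`,
produce one of the cone `F` of `φ : F' ⟶ B`. -/
lemma cone_step {F' B F F'₂ Bhi : C}
    {φ : F' ⟶ B} {gB : B ⟶ F} {h : F ⟶ F'⟦(1:ℤ)⟧}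
    (hT : Triangle.mk φ gB h ∈ distTriang C)
    {β' : F' ⟶ F'₂} {m₁ m₂ : ℤ} (hβ' : GoodApprox t m₁ β')
    {snd : B ⟶ Bhi} (hsnd : GoodApprox t m₂ snd) (hm : m₁ ≤ m₂)
    (hBhi : t.ge m₁ Bhi) :
    ∃ (F₂ : C) (ψ : F'₂ ⟶ Bhi) (g₂ : Bhi ⟶ F₂) (h₂ : F₂ ⟶ F'₂⟦(1:ℤ)⟧) (β : F ⟶ F₂),
      (Triangle.mk ψ g₂ h₂ ∈ distTriang C) ∧ GoodApprox t m₂ β := by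
  obtain ⟨ψ, hψ⟩ := (hβ' Bhi hBhi).2 (φ ≫ snd)
  obtain ⟨F₂, g₂, h₂, hT₂⟩ := distinguished_cocone_triangle ψ
  obtain ⟨β₀, hβ1₀, hβ2₀⟩ :=
    complete_distinguished_triangle_morphism _ _ hT hT₂ β' snd (by exact hψ)
  let β : F ⟶ F₂ := β₀
  have hβ1 : gB ≫ β = snd ≫ g₂ := hβ1₀
  have hβ2 : h ≫ β'⟦(1:ℤ)⟧' = β ≫ h₂ := hβ2₀
  refine ⟨F₂, ψ, g₂, h₂, β, hT₂, ?_⟩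
  have hβ'1 := (hβ'.shift t 1).mono t (show m₁ - 1 ≤ m₂ by omega)
  have hsnd1 := (hsnd.shift t 1).mono t (show m₂ - 1 ≤ m₂ by omega)
  have hφg : φ ≫ gB = 0 := comp_distTriang_mor_zero₁₂ _ hT
  have h7 : h₂ ≫ ψ⟦(1:ℤ)⟧' = 0 := comp_distTriang_mor_zero₃₁ _ hT₂
  have hψ1 : φ⟦(1:ℤ)⟧' ≫ snd⟦(1:ℤ)⟧' = β'⟦(1:ℤ)⟧' ≫ ψ⟦(1:ℤ)⟧' := by
    rw [← CategoryTheory.Functor.map_comp, ← CategoryTheory.Functor.map_comp, hψ]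
  intro Y hY
  have hYm₁ : t.ge m₁ Y := t.ge_antitone hm Y hY
  constructor
  · -- injectivity
    intro u hu
    have hu' : β ≫ u = 0 := hu
    have h1 : snd ≫ g₂ ≫ u = 0 := by
      rw [← Category.assoc, ← hβ1, Category.assoc, hu', comp_zero]
    have h2 : g₂ ≫ u = 0 := (hsnd Y hY).1 _ h1
    obtain ⟨s₀, hs₀⟩ := Triangle.yoneda_exact₃ _ hT₂ u h2
    let s : F'₂⟦(1:ℤ)⟧ ⟶ Y := s₀
    have hs : u = h₂ ≫ s := hs₀
    have h3 : h ≫ β'⟦(1:ℤ)⟧' ≫ s = 0 := by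
      rw [← Category.assoc, hβ2, Category.assoc, ← hs, hu']
    obtain ⟨w₀, hw₀⟩ := Triangle.yoneda_exact₃ _ (rot_of_distTriang _ hT)
      (β'⟦(1:ℤ)⟧' ≫ s) h3
    let w : B⟦(1:ℤ)⟧ ⟶ Y := w₀
    have hw : β'⟦(1:ℤ)⟧' ≫ s = -(φ⟦(1:ℤ)⟧' ≫ w) := by
      refine hw₀.trans ?_
      show (Triangle.mk φ gB h).rotate.mor₃ ≫ w₀ = _
      dsimp [Triangle.rotate]
      exact Preadditive.neg_comp (φ⟦(1:ℤ)⟧') w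
    obtain ⟨w₂, hw₂⟩ := (hsnd1 Y hY).2 w
    have h4 : β'⟦(1:ℤ)⟧' ≫ (s + ψ⟦(1:ℤ)⟧' ≫ w₂) = 0 := by
      rw [Preadditive.comp_add, hw, hw₂, ← Category.assoc, ← Category.assoc, ← hψ1,
        Category.assoc]
      abel
    have h5 : s + ψ⟦(1:ℤ)⟧' ≫ w₂ = 0 := (hβ'1 Y hY).1 _ h4
    have h6 : s = -(ψ⟦(1:ℤ)⟧' ≫ w₂) := by
      rw [← sub_eq_zero, sub_neg_eq_add]; exact h5
    rw [hs, h6, Preadditive.comp_neg, ← Category.assoc, h7, zero_comp, neg_zero]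
  · -- surjectivity
    intro q
    obtain ⟨w₁, hw₁⟩ := (hsnd Y hY).2 (gB ≫ q)
    have h1 : β' ≫ ψ ≫ w₁ = 0 := by
      rw [← Category.assoc, ← hψ, Category.assoc, ← hw₁, ← Category.assoc, hφg, zero_comp]
    have h2 : ψ ≫ w₁ = 0 := (hβ' Y hYm₁).1 _ h1
    obtain ⟨v₀, hv₀⟩ := Triangle.yoneda_exact₂ _ hT₂ w₁ h2
    let v : F₂ ⟶ Y := v₀
    have hv : w₁ = g₂ ≫ v := hv₀
    have h3 : gB ≫ (q - β ≫ v) = 0 := by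
      rw [Preadditive.comp_sub, ← Category.assoc, hβ1, Category.assoc, ← hv, ← hw₁, sub_self]
    obtain ⟨s₀, hs₀⟩ := Triangle.yoneda_exact₃ _ hT (q - β ≫ v) h3
    let s : F'⟦(1:ℤ)⟧ ⟶ Y := s₀
    have hs : q - β ≫ v = h ≫ s := hs₀
    obtain ⟨s₂, hs₂⟩ := (hβ'1 Y hY).2 s
    refine ⟨v + h₂ ≫ s₂, ?_⟩
    have h4 : q - β ≫ v = β ≫ h₂ ≫ s₂ := by
      rw [hs, hs₂, ← Category.assoc, hβ2, Category.assoc]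
    rw [Preadditive.comp_add, ← h4]
    abel

end RouquierApproxProof
namespace RouquierApproxProof

variable {C : Type*} [Category C] [Preadditive C] [HasZeroObject C] [HasShift C ℤ]
  [∀ (n : ℤ), (shiftFunctor C n).Additive] [Pretriangulated C]

variable (t : TStructure C)

noncomputable def iso_to_G_biproduct {G : C} {k : ℕ} {obj : Fin k → C} {sh : Fin k → ℤ}
    (hobj : ∀ i, obj i ∈ ({G} : Set C)) {X : C} (e : X ≅ ⨁ fun i => (obj i)⟦sh i⟧) :
    X ≅ ⨁ fun i => G⟦sh i⟧ :=
  e ≪≫ biproduct.whiskerEquiv (f := fun i => (obj i)⟦sh i⟧) (g := fun i => G⟦sh i⟧)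
    (Equiv.refl _) (fun i => eqToIso (by have h := Set.mem_singleton_iff.1 (hobj i); simp [h]))

/-- The main inductive approximation lemma. -/
lemma main (hb : IsBoundedTStructure t) (G : C) {n0 : ℤ} (hn0 : 0 < n0)
    (hGle : t.le n0 G) (hGge : t.ge (-n0) G) :
    ∀ (d : ℕ) (b : ℤ) (P : C), P ∈ levelSet G (d + 1) →
      ∃ (F F₂ : C) (i : P ⟶ F) (r : F ⟶ P) (β : F ⟶ F₂),
        i ≫ r = 𝟙 P ∧ F₂ ∈ levelSet G (d + 1) ∧ t.ge b F₂ ∧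
          GoodApprox t (b + (2 * n0 + 1) * (d + 1 : ℤ)) β := by
  intro d
  induction d with
  | zero =>
    intro b P hP
    obtain ⟨FF, hFF, iP, rP, hir⟩ := hP
    obtain ⟨k, obj, sh, hobj, ⟨e⟩⟩ := hFF
    obtain ⟨Bhi, snd, hmem, hge, happ⟩ :=
      split_lemma t hb hGle hGge b sh FF (iso_to_G_biproduct hobj e)
    refine ⟨FF, Bhi, iP, rP, snd, hir, finCoprodShifts_subset_addSet _ hmem, hge,
      happ.mono t ?_⟩
    have h1 : (2 * n0 + 1) * ((0:ℕ) + 1 : ℤ) = 2 * n0 + 1 := by push_cast; ring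
    omega
  | succ n ih =>
    intro b P hP
    obtain ⟨FF, hFF, iP, rP, hir⟩ := hP
    obtain ⟨k, Zf, sh, hZmem, ⟨e⟩⟩ := hFF
    have key : ∀ i : Fin k, ∃ (W F₂i : C) (βi : W ⟶ F₂i),
        IsRetract ((Zf i)⟦sh i⟧) W ∧ F₂i ∈ levelSet G (n + 1 + 1) ∧ t.ge b F₂i ∧
          GoodApprox t (b + (2 * n0 + 1) * ((n:ℕ) + 1 + 1 : ℤ)) βi := by
      intro i
      obtain ⟨A, Bc, f, g, hh, hA, hB, distZ⟩ := hZmem i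
      obtain ⟨F', F'₂, iA, rA, β', hirA, hF'lev, hF'ge, happ'⟩ := ih (b + sh i + 1) A hA
      obtain ⟨BB, hBBmem, iB, rB, hirB⟩ := hB
      obtain ⟨k', obj', sh', hobj', ⟨eB⟩⟩ := hBBmem
      set m₁ : ℤ := b + sh i + 1 + (2 * n0 + 1) * ((n:ℕ) + 1 : ℤ) with hm₁
      obtain ⟨Bhi, snd, hmemB, hgeB, happB⟩ :=
        split_lemma t hb hGle hGge m₁ sh' BB (iso_to_G_biproduct hobj' eB)
      obtain ⟨W0, gW, hW, distW⟩ := distinguished_cocone_triangle (rA ≫ f ≫ iB)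
      have hretZ : IsRetract (Zf i) W0 :=
        retract_cone distZ distW hirA hirB
          (by rw [← Category.assoc, hirA, Category.id_comp])
          (by rw [Category.assoc, Category.assoc, hirB, Category.comp_id])
      obtain ⟨F₂C, ψ, g₂, h₂, βW, dist₂, happW⟩ :=
        cone_step t distW happ' happB (by omega) hgeB
      have hF₂lev : F₂C ∈ levelSet G (n + 1 + 1) := by
        show F₂C ∈ addSet (coneSet (levelSet G (n + 1)) (addSet {G}))
        exact mem_addSet_self ⟨F'₂, Bhi, ψ, g₂, h₂, hF'lev,
          finCoprodShifts_subset_addSet _ hmemB, dist₂⟩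
      have hF₂ge : t.ge (b + sh i) F₂C := by
        refine ge_ext t (rot_of_distTriang _ dist₂) ?_ ?_
        · refine t.ge_antitone ?_ _ hgeB
          have h2 : (0:ℤ) ≤ (2 * n0 + 1) * ((n:ℕ) + 1 : ℤ) := by positivity
          omega
        · have h3 := ge_shift' t hF'ge 1
          rwa [show b + sh i + 1 - 1 = b + sh i by ring] at h3
      refine ⟨W0⟦sh i⟧, F₂C⟦sh i⟧, βW⟦sh i⟧', isRetract_shift hretZ (sh i),
        levelSet_shift hF₂lev (sh i), ?_, ?_⟩
      · have h4 := ge_shift' t hF₂ge (sh i)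
        rwa [show b + sh i - sh i = b by ring] at h4
      · refine (happW.shift t (sh i)).mono t ?_
        have h5 : m₁ + 2 * n0 - sh i = b + (2 * n0 + 1) * ((n:ℕ) + 1 + 1 : ℤ) := by
          rw [hm₁]; push_cast; ring
        omega
    choose W F₂i βi hret hlev hge happ using key
    have hretP : IsRetract P (⨁ W) := by
      refine isRetract_trans ⟨iP, rP, hir⟩ (isRetract_trans (isRetract_of_iso e) ?_)
      choose ir rr hret2 using hret
      exact ⟨biproduct.map ir, biproduct.map rr, by ext; simp [hret2]⟩
    obtain ⟨iW, rW, hirW⟩ := hretP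
    refine ⟨⨁ W, ⨁ F₂i, iW, rW, biproduct.map βi, hirW, levelSet_biproduct _ hlev,
      ge_biproduct t hb _ b hge, ?_⟩
    have h6 := GoodApprox.biproduct t βi happ
    have h7 : b + (2 * n0 + 1) * ((n:ℕ) + 1 + 1 : ℤ) = b + (2 * n0 + 1) * ((n + 1 : ℕ) + 1 : ℤ) := by
      push_cast; ring
    rwa [h7] at h6

end RouquierApproxProof
open ZeroObject

/-- Proposition 3.5. Let `T` be a triangulated category with a
bounded t-structure, `G` an object and `d > 0`. There exists `N > 0` such that:
if `E ∈ T^{≥ a}` for some integer `a`, `p : P ⟶ E` is an isomorphism in degrees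
`≥ a - N`, and `P ∈ ⟨G⟩_d`, then `E ∈ ⟨G⟩_d`. -/
theorem statement4 {C : Type*} [Category C] [Preadditive C] [HasZeroObject C] [HasShift C ℤ]
    [∀ (n : ℤ), (shiftFunctor C n).Additive] [Pretriangulated C]
    (t : TStructure C) (hb : IsBoundedTStructure t)
    (G : C) (d : ℕ) (hd : 0 < d) :
    ∃ N : ℤ, 0 < N ∧ ∀ (a : ℤ) (E P : C) (p : P ⟶ E),
      t.ge a E → IsIsoInDegreesGE t (a - N) p → P ∈ levelSet G d →
        E ∈ levelSet G d := by
  classical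
  open RouquierApproxProof in
  obtain ⟨n0, hn0, hGle, hGge⟩ := hb G
  obtain ⟨d', rfl⟩ : ∃ d', d = d' + 1 := ⟨d - 1, by omega⟩
  refine ⟨(2 * n0 + 1) * (d' + 1 : ℤ) + 1, ?_, ?_⟩
  · have h0 : (0:ℤ) ≤ (2 * n0 + 1) * (d' + 1 : ℤ) := by positivity
    omega
  intro a E P p hE hiso hP
  set N : ℤ := (2 * n0 + 1) * (d' + 1 : ℤ) + 1 with hN
  have hN0 : 0 < N := by
    have h0 : (0:ℤ) ≤ (2 * n0 + 1) * (d' + 1 : ℤ) := by positivity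
    omega
  -- truncation triangle of P at a - N
  obtain ⟨L, RA, hL, hRA, ι, π, δ, distP⟩ := t.exists_triangle P (a - N - 1) (a - N) (by ring)
  let TA : TruncGETriangle t (a - N) P := ⟨L, RA, hL, hRA, ι, π, δ, distP⟩
  have hE' : t.ge (a - N) E := t.ge_antitone (by omega) E hE
  have hL0 : t.le (a - N - 1) (0 : C) := le_of_isZero t hb (isZero_zero C) _
  let TB : TruncGETriangle t (a - N) E := ⟨0, E, hL0, hE', 0, 𝟙 E, 0,
    contractible_distinguished₁ E⟩
  have hιp : ι ≫ p = 0 := hom_zero t hL hE' (by omega) _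
  obtain ⟨g₀, hg⟩ := Triangle.yoneda_exact₂ _ distP p hιp
  let g : RA ⟶ E := g₀
  have hg' : p = π ≫ g := hg
  have hgiso : IsIso g := hiso TA TB g (by change π ≫ g = p ≫ 𝟙 E; rw [Category.comp_id]; exact hg'.symm)
  have hRAge : t.ge a RA := ((t.ge a).prop_iff_of_iso (asIso g)).2 hE
  -- main approximation
  obtain ⟨F, F₂, i, r, β, hir, hF₂lev, hF₂ge, happrox⟩ :=
    main t hb G hn0 hGle hGge d' (a - N) P hP
  -- u : RA ⟶ F₂
  have h1 : ι ≫ (i ≫ β) = 0 := hom_zero t hL hF₂ge (by omega) _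
  obtain ⟨u₀, hu⟩ := Triangle.yoneda_exact₂ _ distP (i ≫ β) h1
  let u : RA ⟶ F₂ := u₀
  have hu' : i ≫ β = π ≫ u := hu
  -- v : F₂ ⟶ RA
  have hRAge' : t.ge ((a - N) + (2 * n0 + 1) * (d' + 1 : ℤ)) RA := by
    refine t.ge_antitone (by omega) _ hRAge
  obtain ⟨v, hv⟩ := (happrox RA hRAge').2 (r ≫ π)
  -- u ≫ v = 𝟙 RA
  have hπuv : π ≫ (u ≫ v - 𝟙 RA) = 0 := by
    rw [Preadditive.comp_sub, Category.comp_id, ← Category.assoc, ← hu', Category.assoc,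
      ← hv, ← Category.assoc, hir, Category.id_comp, sub_self]
  obtain ⟨s₀, hs⟩ := Triangle.yoneda_exact₂ _ (rot_of_distTriang _ distP) (u ≫ v - 𝟙 RA) hπuv
  let s : L⟦(1:ℤ)⟧ ⟶ RA := s₀
  have hs' : u ≫ v - 𝟙 RA = δ ≫ s := hs
  have hLs : t.le (a - N - 1 - 1) (L⟦(1:ℤ)⟧) := le_shift' t hL 1
  have hs0 : s = 0 := hom_zero t hLs hRAge (by omega) s
  have huv : u ≫ v = 𝟙 RA := by
    have := hs'
    rw [hs0, comp_zero, sub_eq_zero] at this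
    exact this
  have hRAlev : RA ∈ levelSet G (d' + 1) := levelSet_retract ⟨u, v, huv⟩ hF₂lev
  exact levelSet_iso (asIso g).symm hRAlev
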